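/- Assume κ ≥ 4, ε > 0 and τ > 0, and let u⁰ ∈ ℝ^m satisfy ‖u⁰‖ ≤ 1 and |Σ_{i=1}^m u⁰_i| < m. Define iterates by u^{n+1} = Φ_τ(uⁿ) for n ≥ 0. Then the discrete maximum bound principle holds unconditionally: ‖uⁿ‖ ≤ 1 for every n ≥ 0. -/

import Mathlib

open MeasureTheory

set_option maxHeartbeats 1000000
set_option synthInstance.maxHeartbeats 400000

/-- The nonlinearity f(x) = x − x³. -/
noncomputable def fpt (x : ℝ) : ℝ := x - x ^ 3

/-- The function g(x) = 1 − x². -/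
noncomputable def gpt (x : ℝ) : ℝ := 1 - x ^ 2

/-- The Lagrange multiplier λ(v) = (Σᵢ f(vᵢ)) / (Σᵢ g(vᵢ)). -/
noncomputable def lam {m : ℕ} (v : Fin m → ℝ) : ℝ :=
  (∑ i, fpt (v i)) / (∑ i, gpt (v i))

/-- The stabilized nonlinear term N_κ(v)ᵢ = κ vᵢ + f(vᵢ) − λ(v) g(vᵢ). -/
noncomputable def Nk {m : ℕ} (κ : ℝ) (v : Fin m → ℝ) : Fin m → ℝ :=
  fun i => κ * v i + fpt (v i) - lam v * gpt (v i)

/-- The stabilized linear operator L_κ = ε²A − κ·Id. -/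
noncomputable def Lk {m : ℕ} (A : (Fin m → ℝ) →L[ℝ] (Fin m → ℝ)) (ε κ : ℝ) :
    (Fin m → ℝ) →L[ℝ] (Fin m → ℝ) :=
  ε ^ 2 • A - κ • ContinuousLinearMap.id ℝ (Fin m → ℝ)

/-- The ETD1 step Φ_τ(v) = exp(τL_κ)v + ∫₀^τ exp((τ−s)L_κ) N_κ(v) ds. -/
noncomputable def Phi {m : ℕ} (A : (Fin m → ℝ) →L[ℝ] (Fin m → ℝ)) (ε κ τ : ℝ)
    (v : Fin m → ℝ) : Fin m → ℝ :=
  (NormedSpace.exp (τ • Lk A ε κ)) v +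
    ∫ s in (0 : ℝ)..τ, (NormedSpace.exp ((τ - s) • Lk A ε κ)) (Nk κ v)

/-- The ETDRK2 step
Ψ_τ(v) = exp(τL_κ)v + ∫₀^τ exp((τ−s)L_κ)[(1−s/τ)N_κ(v) + (s/τ)N_κ(Φ_τ(v))] ds. -/
noncomputable def Psi {m : ℕ} (A : (Fin m → ℝ) →L[ℝ] (Fin m → ℝ)) (ε κ τ : ℝ)
    (v : Fin m → ℝ) : Fin m → ℝ :=
  (NormedSpace.exp (τ • Lk A ε κ)) v +
    ∫ s in (0 : ℝ)..τ, (NormedSpace.exp ((τ - s) • Lk A ε κ))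
      ((1 - s / τ) • Nk κ v + (s / τ) • Nk κ (Phi A ε κ τ v))

/-- |λ(v)| ≤ 1 when ‖v‖ ≤ 1. -/
lemma abs_lam_le {m : ℕ} (v : Fin m → ℝ) (hv : ‖v‖ ≤ 1) : |lam v| ≤ 1 := by
  have hvi : ∀ i, |v i| ≤ 1 := fun i => by
    have := norm_le_pi_norm v i; simp only [Real.norm_eq_abs] at this; linarith
  have hg : ∀ i, 0 ≤ gpt (v i) := fun i => by
    have := hvi i; rw [abs_le] at this; simp only [gpt]; nlinarith
  have hS : 0 ≤ ∑ i, gpt (v i) := Finset.sum_nonneg fun i _ => hg i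
  have hf : |∑ i, fpt (v i)| ≤ ∑ i, gpt (v i) := by
    refine (Finset.abs_sum_le_sum_abs _ _).trans (Finset.sum_le_sum fun i _ => ?_)
    have h1 := hvi i; rw [abs_le] at h1
    rw [abs_le]; constructor <;> simp only [fpt, gpt] <;>
      nlinarith [mul_nonneg (mul_nonneg (by linarith : (0:ℝ) ≤ 1 - v i) (by linarith : (0:ℝ) ≤ 1 + v i)) (by linarith : (0:ℝ) ≤ 1 - v i),
        mul_nonneg (mul_nonneg (by linarith : (0:ℝ) ≤ 1 - v i) (by linarith : (0:ℝ) ≤ 1 + v i)) (by linarith : (0:ℝ) ≤ 1 + v i)]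
  rcases eq_or_lt_of_le hS with h | h
  · have : (∑ i, fpt (v i)) = 0 := by
      have := abs_nonneg (∑ i, fpt (v i)); rw [← h] at hf
      have : |∑ i, fpt (v i)| = 0 := le_antisymm hf (abs_nonneg _)
      exact abs_eq_zero.mp this
    simp [lam, this]
  · rw [lam, abs_div, abs_of_pos h, div_le_one h]
    exact hf

/-- ‖N_κ(v)‖ ≤ κ when κ ≥ 4 and ‖v‖ ≤ 1. -/
lemma Nk_norm_le {m : ℕ} (κ : ℝ) (v : Fin m → ℝ) (hκ : 4 ≤ κ) (hv : ‖v‖ ≤ 1) :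
    ‖Nk κ v‖ ≤ κ := by
  have hκ0 : (0 : ℝ) ≤ κ := by linarith
  rw [pi_norm_le_iff_of_nonneg hκ0]
  intro i
  have hvi : |v i| ≤ 1 := by
    have := norm_le_pi_norm v i; simp only [Real.norm_eq_abs] at this; linarith
  have hl := abs_lam_le v hv
  rw [abs_le] at hvi hl
  set x := v i
  set l := lam v
  rw [Real.norm_eq_abs, abs_le]
  constructor <;> simp only [Nk, fpt, gpt] <;>
    nlinarith [mul_nonneg (mul_nonneg (by linarith : (0:ℝ) ≤ 1 - x) (by linarith : (0:ℝ) ≤ 1 + x)) (by linarith : (0:ℝ) ≤ 1 - l),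
      mul_nonneg (mul_nonneg (by linarith : (0:ℝ) ≤ 1 - x) (by linarith : (0:ℝ) ≤ 1 + x)) (by linarith : (0:ℝ) ≤ 1 + l),
      mul_nonneg (by linarith : (0:ℝ) ≤ 1 - x) (by linarith : (0:ℝ) ≤ 1 + x),
      mul_nonneg (by linarith : (0:ℝ) ≤ 1 + x) (by linarith : (0:ℝ) ≤ 1 - x)]

/-- The semigroup factorization exp(tL_κ) = e^{−κt} exp(tε²A). -/
lemma exp_Lk_eq {m : ℕ} (A : (Fin m → ℝ) →L[ℝ] (Fin m → ℝ)) (ε κ t : ℝ) :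
    NormedSpace.exp (t • Lk A ε κ)
      = Real.exp (-(κ * t)) • NormedSpace.exp ((t * ε ^ 2) • A) := by
  have h1 : t • Lk A ε κ = (t * ε ^ 2) • A + (-(κ * t)) • (1 : (Fin m → ℝ) →L[ℝ] (Fin m → ℝ)) := by
    refine ContinuousLinearMap.ext fun w => ?_
    simp only [Lk, ContinuousLinearMap.smul_apply, ContinuousLinearMap.add_apply,
      ContinuousLinearMap.sub_apply, ContinuousLinearMap.one_apply,
      ContinuousLinearMap.coe_id', id_eq]
    module
  rw [h1]
  have hcomm : Commute ((t * ε ^ 2) • A)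
      ((-(κ * t)) • (1 : (Fin m → ℝ) →L[ℝ] (Fin m → ℝ))) :=
    ((Commute.one_right _).smul_right _)
  let +nondep : NormedAlgebra ℚ ((Fin m → ℝ) →L[ℝ] (Fin m → ℝ)) := .restrictScalars ℚ ℝ _
  rw [NormedSpace.exp_add_of_commute hcomm]
  have h2 : ((-(κ * t)) • (1 : (Fin m → ℝ) →L[ℝ] (Fin m → ℝ)))
      = algebraMap ℝ _ (-(κ * t)) := (Algebra.algebraMap_eq_smul_one _).symm
  rw [h2, ← NormedSpace.algebraMap_exp_comm, Algebra.algebraMap_eq_smul_one,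
    mul_smul_comm, mul_one, ← Real.exp_eq_exp_ℝ]

/-- Contraction estimate for the stabilized semigroup. -/
lemma exp_Lk_norm {m : ℕ} (A : (Fin m → ℝ) →L[ℝ] (Fin m → ℝ))
    (hC : ∀ t : ℝ, 0 ≤ t → ∀ v : Fin m → ℝ, ‖(NormedSpace.exp (t • A)) v‖ ≤ ‖v‖)
    (ε κ t : ℝ) (hκ : 0 ≤ κ) (ht : 0 ≤ t) (w : Fin m → ℝ) :
    ‖(NormedSpace.exp (t • Lk A ε κ)) w‖ ≤ Real.exp (-(κ * t)) * ‖w‖ := by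
  rw [exp_Lk_eq]
  rw [ContinuousLinearMap.smul_apply, norm_smul, Real.norm_eq_abs,
    abs_of_pos (Real.exp_pos _)]
  exact mul_le_mul_of_nonneg_left (hC _ (by positivity) w) (Real.exp_pos _).le

theorem stmt_8 (m : ℕ) (hm : 1 ≤ m) (A : (Fin m → ℝ) →L[ℝ] (Fin m → ℝ))
    (hC : ∀ t : ℝ, 0 ≤ t → ∀ v : Fin m → ℝ, ‖(NormedSpace.exp (t • A)) v‖ ≤ ‖v‖)
    (hS : ∀ v : Fin m → ℝ, ∑ i, A v i = 0)
    (κ ε τ : ℝ) (hκ : κ ≥ 4) (hε : ε > 0) (hτ : τ > 0)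
    (u : ℕ → Fin m → ℝ) (hnorm0 : ‖u 0‖ ≤ 1) (hmass0 : |∑ i, u 0 i| < (m : ℝ))
    (hstep : ∀ n : ℕ, u (n + 1) = Phi A ε κ τ (u n)) :
    ∀ n : ℕ, ‖u n‖ ≤ 1 := by
  have hκ0 : (0 : ℝ) ≤ κ := by linarith
  have hκpos : (0 : ℝ) < κ := by linarith
  -- single step estimate
  have key : ∀ v : Fin m → ℝ, ‖v‖ ≤ 1 → ‖Phi A ε κ τ v‖ ≤ 1 := by
    intro v hv
    have hN := Nk_norm_le κ v hκ hv
    -- continuity of the integrand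
    have hcontM : Continuous fun s : ℝ =>
        NormedSpace.exp ((τ - s) • Lk A ε κ) := by
      let +nondep : NormedAlgebra ℚ ((Fin m → ℝ) →L[ℝ] (Fin m → ℝ)) := .restrictScalars ℚ ℝ _
      exact NormedSpace.exp_continuous.comp (((continuous_const.sub continuous_id).smul continuous_const))
    have hcontF : Continuous fun s : ℝ =>
        (NormedSpace.exp ((τ - s) • Lk A ε κ)) (Nk κ v) :=
      hcontM.clm_apply continuous_const
    -- pointwise norm bound on [0, τ]
    have hbound : ∀ s ∈ Set.Icc (0:ℝ) τ,
        ‖(NormedSpace.exp ((τ - s) • Lk A ε κ)) (Nk κ v)‖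
          ≤ Real.exp (-(κ * (τ - s))) * κ := by
      intro s hs
      calc ‖(NormedSpace.exp ((τ - s) • Lk A ε κ)) (Nk κ v)‖
          ≤ Real.exp (-(κ * (τ - s))) * ‖Nk κ v‖ :=
            exp_Lk_norm A hC ε κ (τ - s) hκ0 (by linarith [hs.2]) _
        _ ≤ Real.exp (-(κ * (τ - s))) * κ :=
            mul_le_mul_of_nonneg_left hN (Real.exp_pos _).le
    -- value of the comparison integral
    have hint : (∫ s in (0:ℝ)..τ, Real.exp (-(κ * (τ - s))) * κ)
        = 1 - Real.exp (-(κ * τ)) := by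
      have hderiv : ∀ s ∈ Set.uIcc (0:ℝ) τ,
          HasDerivAt (fun s : ℝ => Real.exp (κ * s - κ * τ))
            (Real.exp (-(κ * (τ - s))) * κ) s := by
        intro s _
        have h1 : HasDerivAt (fun s : ℝ => κ * s - κ * τ) κ s := by
          simpa using ((hasDerivAt_id s).const_mul κ).sub_const (κ * τ)
        have := h1.exp
        convert this using 1
        ring_nf
      have hcont' : IntervalIntegrable (fun s : ℝ => Real.exp (-(κ * (τ - s))) * κ)
          volume 0 τ :=
        (Continuous.intervalIntegrable
          ((Real.continuous_exp.comp
            ((continuous_const.mul (continuous_const.sub continuous_id)).neg)).mul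
            continuous_const) 0 τ)
      have := intervalIntegral.integral_eq_sub_of_hasDerivAt hderiv hcont'
      rw [this]
      rw [show κ * τ - κ * τ = 0 by ring, show κ * 0 - κ * τ = -(κ * τ) by ring,
        Real.exp_zero]
    -- bound the integral term
    have hIntLe : ‖∫ s in (0:ℝ)..τ,
        (NormedSpace.exp ((τ - s) • Lk A ε κ)) (Nk κ v)‖
          ≤ 1 - Real.exp (-(κ * τ)) := by
      calc ‖∫ s in (0:ℝ)..τ, (NormedSpace.exp ((τ - s) • Lk A ε κ)) (Nk κ v)‖
          ≤ ∫ s in (0:ℝ)..τ,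
              ‖(NormedSpace.exp ((τ - s) • Lk A ε κ)) (Nk κ v)‖ :=
            intervalIntegral.norm_integral_le_integral_norm hτ.le
        _ ≤ ∫ s in (0:ℝ)..τ, Real.exp (-(κ * (τ - s))) * κ := by
            apply intervalIntegral.integral_mono_on hτ.le
            · exact hcontF.norm.intervalIntegrable 0 τ
            · exact Continuous.intervalIntegrable
                ((Real.continuous_exp.comp
                  ((continuous_const.mul (continuous_const.sub continuous_id)).neg)).mul
                  continuous_const) 0 τ
            · exact hbound
        _ = 1 - Real.exp (-(κ * τ)) := hint
    -- conclude
    have hLin : ‖(NormedSpace.exp (τ • Lk A ε κ)) v‖ ≤ Real.exp (-(κ * τ)) := by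
      calc ‖(NormedSpace.exp (τ • Lk A ε κ)) v‖
          ≤ Real.exp (-(κ * τ)) * ‖v‖ := exp_Lk_norm A hC ε κ τ hκ0 hτ.le v
        _ ≤ Real.exp (-(κ * τ)) * 1 :=
            mul_le_mul_of_nonneg_left hv (Real.exp_pos _).le
        _ = Real.exp (-(κ * τ)) := mul_one _
    calc ‖Phi A ε κ τ v‖ ≤ ‖(NormedSpace.exp (τ • Lk A ε κ)) v‖
          + ‖∫ s in (0:ℝ)..τ, (NormedSpace.exp ((τ - s) • Lk A ε κ)) (Nk κ v)‖ :=
        norm_add_le _ _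
      _ ≤ Real.exp (-(κ * τ)) + (1 - Real.exp (-(κ * τ))) := add_le_add hLin hIntLe
      _ = 1 := by ring
  intro n
  induction n with
  | zero => exact hnorm0
  | succ n ih => rw [hstep n]; exact key (u n) ih
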